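/- Let κ₀, κ₁, κ₂ ∈ {−1, +1} with κ₁ = κ₂. Then for all ξ, η ∈ ℝ⁴, the phase q_K(ξ, η) = −κ₀|ξ| − κ₁⟨ξ+η⟩ + κ₂⟨η⟩ satisfies the time-resonance lower bound |q_K(ξ, η)| ≥ |ξ| / (⟨η⟩ (⟨ξ⟩ + ⟨ξ+η⟩ + ⟨η⟩)). -/

import Mathlib

/-- Japanese bracket `⟨x⟩ = √(1 + |x|²)` on `ℝ⁴`. -/
noncomputable def jb (x : EuclideanSpace ℝ (Fin 4)) : ℝ := Real.sqrt (1 + ‖x‖ ^ 2)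

lemma jb_sq (x : EuclideanSpace ℝ (Fin 4)) : (jb x) ^ 2 = 1 + ‖x‖ ^ 2 := by
  have : (0:ℝ) ≤ 1 + ‖x‖ ^ 2 := by positivity
  simpa [jb] using Real.sq_sqrt this

lemma one_le_jb (x : EuclideanSpace ℝ (Fin 4)) : 1 ≤ jb x := by
  have h : (1:ℝ) ≤ 1 + ‖x‖ ^ 2 := by nlinarith [sq_nonneg ‖x‖]
  calc (1:ℝ) = Real.sqrt 1 := (Real.sqrt_one).symm
    _ ≤ jb x := Real.sqrt_le_sqrt h

lemma norm_le_jb (x : EuclideanSpace ℝ (Fin 4)) : ‖x‖ ≤ jb x := by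
  have h : ‖x‖ ^ 2 ≤ 1 + ‖x‖ ^ 2 := by linarith
  calc ‖x‖ = Real.sqrt (‖x‖ ^ 2) := by rw [Real.sqrt_sq (norm_nonneg x)]
    _ ≤ jb x := Real.sqrt_le_sqrt h

/-- The key real-number estimate. -/
lemma key (a b u s r t : ℝ) (ha : 0 ≤ a) (hb : 0 ≤ b) (hr : 1 ≤ r) (hs1 : 1 ≤ s)
    (hrb : r ^ 2 = 1 + b ^ 2) (hs2 : s ^ 2 = 1 + a ^ 2 + 2 * u + b ^ 2)
    (hu : |u| ≤ a * b) (ht : a ≤ t) :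
    a / (r * (t + s + r)) ≤ a + s - r ∧ a / (r * (t + s + r)) ≤ a + r - s := by
  obtain ⟨hu1, hu2⟩ := abs_le.mp hu
  have hr0 : (0:ℝ) < r := lt_of_lt_of_le one_pos hr
  have hs0 : (0:ℝ) < s := lt_of_lt_of_le one_pos hs1
  have hbr : b ≤ r := by nlinarith
  have hD : 0 < r * (t + s + r) := by
    have : 0 < t + s + r := by linarith
    positivity
  -- b - a ≤ s
  have hba : b - a ≤ s := by nlinarith [sq_nonneg (s + a - b), sq_nonneg (a - b)]
  -- r ≤ a + s
  have hA0 : r ≤ a + s := by nlinarith [sq_nonneg (a + s - r), mul_nonneg ha (by linarith : (0:ℝ) ≤ a + s - b)]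
  -- s ≤ a + r
  have hB0 : s ≤ a + r := by nlinarith [sq_nonneg (a + r - s), mul_nonneg ha (by linarith : (0:ℝ) ≤ r - b)]
  -- 1 ≤ 2 r (r - b)
  have h2r : 1 ≤ 2 * r * (r - b) := by nlinarith [sq_nonneg (r - b)]
  constructor
  · rw [div_le_iff₀ hD]
    -- a ≤ (a+s-r) * (r*(t+s+r))
    have h1 : 2 * a * (r - b) ≤ (a + s) ^ 2 - r ^ 2 := by nlinarith [mul_nonneg ha (by linarith : (0:ℝ) ≤ a + s - r)]
    have h2 : a ≤ r * ((a + s) ^ 2 - r ^ 2) := by nlinarith [mul_le_mul_of_nonneg_left h1 hr0.le, mul_le_mul_of_nonneg_left h2r ha]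
    have h3 : (a + s - r) * (r * (a + s + r)) = r * ((a + s) ^ 2 - r ^ 2) := by ring
    have h4 : (a + s - r) * (r * (a + s + r)) ≤ (a + s - r) * (r * (t + s + r)) := by
      apply mul_le_mul_of_nonneg_left _ (by linarith : (0:ℝ) ≤ a + s - r)
      apply mul_le_mul_of_nonneg_left (by linarith) hr0.le
    linarith [h3 ▸ h4]
  · rw [div_le_iff₀ hD]
    have h1 : 2 * a * (r - b) ≤ (a + r) ^ 2 - s ^ 2 := by nlinarith
    have h2 : a ≤ r * ((a + r) ^ 2 - s ^ 2) := by nlinarith [mul_le_mul_of_nonneg_left h1 hr0.le, mul_le_mul_of_nonneg_left h2r ha]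
    have h3 : (a + r - s) * (r * (a + s + r)) = r * ((a + r) ^ 2 - s ^ 2) := by ring
    have h4 : (a + r - s) * (r * (a + s + r)) ≤ (a + r - s) * (r * (t + s + r)) := by
      apply mul_le_mul_of_nonneg_left _ (by linarith : (0:ℝ) ≤ a + r - s)
      apply mul_le_mul_of_nonneg_left (by linarith) hr0.le
    linarith [h3 ▸ h4]

/-- If `κ₁ = κ₂`, then for all `ξ, η ∈ ℝ⁴`, the phase
`q_K(ξ, η) = −κ₀|ξ| − κ₁⟨ξ+η⟩ + κ₂⟨η⟩` satisfies the time-resonance lower bound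
`|q_K(ξ, η)| ≥ |ξ| / (⟨η⟩ (⟨ξ⟩ + ⟨ξ+η⟩ + ⟨η⟩))`. -/
theorem maxwell_phase_time_resonance_lower_bound (κ₀ κ₁ κ₂ : ℝ)
    (h₀ : κ₀ = -1 ∨ κ₀ = 1) (h₁ : κ₁ = -1 ∨ κ₁ = 1) (h₂ : κ₂ = -1 ∨ κ₂ = 1)
    (heq : κ₁ = κ₂)
    (ξ η : EuclideanSpace ℝ (Fin 4)) :
    ‖ξ‖ / (jb η * (jb ξ + jb (ξ + η) + jb η))
      ≤ |(-κ₀) * ‖ξ‖ - κ₁ * jb (ξ + η) + κ₂ * jb η| := by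
  subst heq
  set a := ‖ξ‖ with hadef
  set b := ‖η‖ with hbdef
  set u := (inner ℝ ξ η : ℝ) with hudef
  set s := jb (ξ + η) with hsdef
  set r := jb η with hrdef
  set t := jb ξ with htdef
  have hkey := key a b u s r t (norm_nonneg ξ) (norm_nonneg η) (one_le_jb η)
    (one_le_jb (ξ + η)) (jb_sq η)
    (by rw [hsdef, jb_sq, norm_add_sq_real]; ring)
    (abs_real_inner_le_norm ξ η) (norm_le_jb ξ)
  obtain ⟨hA, hB⟩ := hkey
  rcases h₀ with rfl | rfl <;> rcases h₁ with rfl | rfl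
  · -- κ₀ = -1, κ = -1 : expr = a + s - r
    rw [show (-(-1:ℝ)) * a - (-1) * s + (-1) * r = a + s - r by ring]
    exact hA.trans (le_abs_self _)
  · -- κ₀ = -1, κ = 1 : expr = a - s + r
    rw [show (-(-1:ℝ)) * a - 1 * s + 1 * r = a + r - s by ring]
    exact hB.trans (le_abs_self _)
  · -- κ₀ = 1, κ = -1 : expr = -a + s - r
    rw [show (-(1:ℝ)) * a - (-1) * s + (-1) * r = -(a + r - s) by ring, abs_neg]
    exact hB.trans (le_abs_self _)
  · -- κ₀ = 1, κ = 1 : expr = -a - s + r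
    rw [show (-(1:ℝ)) * a - 1 * s + 1 * r = -(a + s - r) by ring, abs_neg]
    exact hA.trans (le_abs_self _)
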